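/- If rotor configurations ρ and ρ' on G are equivalent (ρ ≡ ρ'), then for every particle configuration τ the configurations τρ and τρ' are equivalent: τρ ≡ τρ'. -/

import Mathlib

open Function

/-- A strongly connected finite directed multigraph (self-loops and multiple arcs
allowed), given by source and head maps `src, head : E → V`, together with a nonempty
target set `T` and a rotor mechanism at each vertex: `next` is a cyclic ordering of
the arcs emanating from each vertex (it permutes the arcs, preserves the source, and
acts transitively on the arcs emanating from any fixed vertex). -/
structure RotorSystem (V E : Type) [Fintype V] [DecidableEq V] [Fintype E]
    [DecidableEq E] where
  src : E → V
  head : E → V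
  T : Finset V
  T_nonempty : T.Nonempty
  strongly_connected : ∀ v w : V,
    Relation.ReflTransGen (fun a b => ∃ e : E, src e = a ∧ head e = b) v w
  next : E → E
  next_src : ∀ e, src (next e) = src e
  next_bijective : Function.Bijective next
  next_cyclic : ∀ e e', src e = src e' → ∃ k : ℕ, next^[k] e = e'

namespace RotorSystem

variable {V E : Type} [Fintype V] [DecidableEq V] [Fintype E] [DecidableEq E]

/-- The set `V₀ = V - T` of non-target vertices. -/
abbrev V0 (S : RotorSystem V E) : Type := {v : V // v ∉ S.T}

/-- A rotor configuration: each non-target vertex carries an arc emanating from it. -/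
abbrev RConf (S : RotorSystem V E) : Type :=
  {ρ : S.V0 → E // ∀ v : S.V0, S.src (ρ v) = v.1}

/-- A particle configuration: a number of particles at each non-target vertex. -/
abbrev PConf (S : RotorSystem V E) : Type := S.V0 → ℕ

variable (S : RotorSystem V E)

/-- One step of a single particle's rotor walk: at a non-target vertex the rotor is
first progressed and the particle then moves along the new rotor arc; target vertices
absorb the particle. -/
def step (p : V × S.RConf) : V × S.RConf :=
  if h : p.1 ∈ S.T then p
  else
    (S.head (S.next (p.2.1 ⟨p.1, h⟩)),
      ⟨Function.update p.2.1 ⟨p.1, h⟩ (S.next (p.2.1 ⟨p.1, h⟩)), by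
        intro w
        rcases eq_or_ne w ⟨p.1, h⟩ with rfl | hw
        · rw [Function.update_self, S.next_src]
          exact p.2.2 ⟨p.1, h⟩
        · rw [Function.update_of_ne hw]
          exact p.2.2 w⟩)

open Classical in
/-- Route a single particle from `x` by rotor walk until it first reaches the target
set; the result is the pair (final position, final rotor configuration). -/
noncomputable def route (x : V) (ρ : S.RConf) : V × S.RConf :=
  if h : ∃ n, (S.step^[n] (x, ρ)).1 ∈ S.T then S.step^[Nat.find h] (x, ρ) else (x, ρ)

/-- `t_x(ρ)`: the target vertex reached by a single particle started at `x` with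
initial rotor configuration `ρ`. -/
noncomputable def tgt (x : V) (ρ : S.RConf) : V := (S.route x ρ).1

/-- The particle addition operator `E_v`: add one particle at `v` and route it to the
target set. -/
noncomputable def addAt (v : S.V0) (ρ : S.RConf) : S.RConf := (S.route v.1 ρ).2

/-- The action `σρ` of a particle configuration on a rotor configuration: place
`σ v` particles at each vertex `v` and route them all to the target set. -/
noncomputable def act (σ : S.PConf) (ρ : S.RConf) : S.RConf :=
  (Finset.univ : Finset S.V0).toList.foldr (fun v r => (S.addAt v)^[σ v] r) ρ

/-- Equivalence of rotor configurations: `ρ ≡ ρ'` iff `σρ = σρ'` for some particle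
configuration `σ`. -/
def REquiv (ρ ρ' : S.RConf) : Prop := ∃ σ : S.PConf, S.act σ ρ = S.act σ ρ'

/-- The outdegree `d(v)`. -/
def outdeg (v : V) : ℕ := (Finset.univ.filter fun e : E => S.src e = v).card

/-- The number `d(v,w)` of arcs from `v` to `w`. -/
def numArcs (v w : V) : ℕ :=
  (Finset.univ.filter fun e : E => S.src e = v ∧ S.head e = w).card

/-- A particle configuration is stable if every non-target vertex holds at most
`d(v) - 1` particles. -/
def IsStable (σ : S.PConf) : Prop := ∀ v : S.V0, σ v < S.outdeg v.1

/-- Parallel toppling: every unstable vertex topples once, sending one particle along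
each arc emanating from it. -/
def toppleStep (σ : S.PConf) : S.PConf := fun v =>
  (if S.outdeg v.1 ≤ σ v then σ v - S.outdeg v.1 else σ v) +
    ∑ w : S.V0, (if S.outdeg w.1 ≤ σ w then S.numArcs w.1 v.1 else 0)

open Classical in
/-- The stabilization `σ°` of a particle configuration. -/
noncomputable def stabilize (σ : S.PConf) : S.PConf :=
  if h : ∃ n, S.IsStable (S.toppleStep^[n] σ) then S.toppleStep^[Nat.find h] σ else σ

/-- A stable particle configuration is recurrent if it is reachable (by adding
particles and stabilizing) from every particle configuration.  The recurrent
configurations form the sandpile group `S(G/T)` under addition-then-stabilization. -/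
def IsRecurrent (τ : S.PConf) : Prop :=
  S.IsStable τ ∧ ∀ σ : S.PConf, ∃ τ' : S.PConf, τ = S.stabilize (τ' + σ)

/-- `e` is the identity element of the sandpile group `S(G/T)`. -/
def IsSandpileIdentity (e : S.PConf) : Prop :=
  S.IsRecurrent e ∧ ∀ τ : S.PConf, S.IsRecurrent τ → S.stabilize (e + τ) = τ

/-- The rotor arcs of `ρ`, as a relation on vertices. -/
def rotorRel (ρ : S.RConf) (a b : V) : Prop :=
  ∃ h : a ∉ S.T, S.head (ρ.1 ⟨a, h⟩) = b

/-- A rotor configuration is acyclic if its rotor arcs contain no directed cycle. -/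
def IsAcyclicConf (ρ : S.RConf) : Prop :=
  ∀ v : V, ¬ Relation.TransGen (S.rotorRel ρ) v v

/-- `ρ'` is obtained from `ρ` by pushing a cycle: there are distinct non-target
vertices `v_0, …, v_{r-1}` with the rotor arc of `v_j` pointing to `v_{j+1}`
(cyclically); each such rotor is regressed one step, other rotors are unchanged. -/
def IsCyclePush (ρ ρ' : S.RConf) : Prop :=
  ∃ r : ℕ, 0 < r ∧ ∃ f : ZMod r → S.V0, Function.Injective f ∧
    (∀ j : ZMod r, S.head (ρ.1 (f j)) = (f (j + 1)).1) ∧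
    (∀ j : ZMod r, S.next (ρ'.1 (f j)) = ρ.1 (f j)) ∧
    (∀ v : S.V0, v ∉ Set.range f → ρ'.1 v = ρ.1 v)

end RotorSystem

namespace RotorSystem

variable {V E : Type} [Fintype V] [DecidableEq V] [Fintype E] [DecidableEq E]
variable (S : RotorSystem V E)

lemma step_fst (x : V) (ρ : S.RConf) (h : x ∉ S.T) :
    (S.step (x, ρ)).1 = S.head (S.next (ρ.1 ⟨x, h⟩)) := by
  simp [RotorSystem.step, h]

lemma step_snd_apply (x : V) (ρ : S.RConf) (h : x ∉ S.T) (w : S.V0) :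
    ((S.step (x, ρ)).2).1 w =
      if w = ⟨x, h⟩ then S.next (ρ.1 ⟨x, h⟩) else ρ.1 w := by
  rcases eq_or_ne w ⟨x, h⟩ with rfl | hw
  · simp [RotorSystem.step, h]
  · simp [RotorSystem.step, h, Function.update_of_ne hw, hw]

lemma step_of_mem (p : V × S.RConf) (h : p.1 ∈ S.T) : S.step p = p := by
  simp [RotorSystem.step, h]

/-- Termination: every rotor walk reaches the target set. -/
lemma term (x : V) (ρ : S.RConf) : ∃ n, ((S.step)^[n] (x, ρ)).1 ∈ S.T := by
  by_contra hc
  push_neg at hc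
  set P : ℕ → V := fun n => ((S.step)^[n] (x, ρ)).1 with hP
  set C : ℕ → S.RConf := fun n => ((S.step)^[n] (x, ρ)).2 with hCdef
  have hPC : ∀ n, (S.step)^[n] (x, ρ) = (P n, C n) := fun n => rfl
  have f1 : ∀ n, P n ∉ S.T := hc
  have hsucc : ∀ n, (S.step)^[n+1] (x, ρ) = S.step (P n, C n) := by
    intro n
    rw [Function.iterate_succ_apply', hPC]
  have f2 : ∀ n (w : S.V0), (C (n+1)).1 w =
      if w = ⟨P n, f1 n⟩ then S.next ((C n).1 ⟨P n, f1 n⟩) else (C n).1 w := by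
    intro n w
    have : C (n+1) = (S.step (P n, C n)).2 := by rw [hCdef]; simp only; rw [hsucc]
    rw [this, S.step_snd_apply (P n) (C n) (f1 n) w]
  have f3 : ∀ n, P (n+1) = S.head (S.next ((C n).1 ⟨P n, f1 n⟩)) := by
    intro n
    have : P (n+1) = (S.step (P n, C n)).1 := by rw [hP]; simp only; rw [hsucc]
    rw [this, S.step_fst (P n) (C n) (f1 n)]
  -- propagation of infinite visiting
  have key : ∀ v : V, (P ⁻¹' {v}).Infinite → ∀ e : E, S.src e = v →
      (P ⁻¹' {S.head e}).Infinite := by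
    intro v hv e he
    obtain ⟨n₀, hn₀⟩ : ∃ n, P n = v := by
      obtain ⟨n, hn⟩ := hv.nonempty; exact ⟨n, hn⟩
    have hvT : v ∉ S.T := hn₀ ▸ f1 n₀
    set v0 : S.V0 := ⟨v, hvT⟩ with hv0
    set N : ℕ → ℕ := fun n => ((Finset.range n).filter (fun i => P i = v)).card with hN
    have hNmono : ∀ n, N (n+1) = if P n = v then N n + 1 else N n := by
      intro n
      rw [hN]
      simp only [Finset.range_add_one, Finset.filter_insert]
      split
      · rw [Finset.card_insert_of_notMem (by simp)]
      · rfl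
    have hNle : ∀ n, N n ≤ n := by
      intro n
      calc N n ≤ (Finset.range n).card := Finset.card_filter_le _ _
        _ = n := Finset.card_range n
    have hC : ∀ n, (C n).1 v0 = (S.next)^[N n] ((C 0).1 v0) := by
      intro n
      induction n with
      | zero => simp [hN]
      | succ n ih =>
        have h2 := f2 n v0
        rw [hNmono n]
        rcases eq_or_ne (P n) v with hpv | hpv
        · have hw : v0 = ⟨P n, f1 n⟩ := by exact Subtype.ext hpv.symm
          rw [h2, if_pos hw, if_pos hpv, ← hw, ih, Function.iterate_succ_apply']
        · have hw : v0 ≠ ⟨P n, f1 n⟩ := by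
            intro hcon
            exact hpv (Subtype.ext_iff.mp hcon).symm
          rw [h2, if_neg hw, if_neg hpv, ih]
    have hexit : ∀ n, P n = v →
        P (n+1) = S.head ((S.next)^[N n + 1] ((C 0).1 v0)) := by
      intro n hn
      have harg : (C n).1 ⟨P n, f1 n⟩ = (C n).1 v0 :=
        congrArg (C n).1 (Subtype.ext hn : (⟨P n, f1 n⟩ : S.V0) = v0)
      rw [f3 n, harg, hC n, Function.iterate_succ_apply']
    -- every visit count is achieved at some visit time
    have visits : ∀ j, ∃ n, P n = v ∧ N n = j := by
      intro j
      induction j with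
      | zero =>
        have hex : ∃ n, P n = v := ⟨n₀, hn₀⟩
        refine ⟨Nat.find hex, Nat.find_spec hex, ?_⟩
        rw [hN]
        simp only [Finset.card_eq_zero, Finset.filter_eq_empty_iff, Finset.mem_range]
        intro i hi
        exact Nat.find_min hex hi
      | succ j ih =>
        obtain ⟨n, hn, hNn⟩ := ih
        have hex : ∃ m, n < m ∧ P m = v := by
          obtain ⟨m, hm, hlt⟩ := hv.exists_gt n
          exact ⟨m, hlt, hm⟩
        set m := Nat.find hex with hm
        obtain ⟨hlt, hPm⟩ := Nat.find_spec hex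
        refine ⟨m, hPm, ?_⟩
        -- N m = N (n+1) since no visits in between
        have hconst : ∀ d, n + 1 + d ≤ m → N (n + 1 + d) = N (n+1) := by
          intro d
          induction d with
          | zero => intro _; rfl
          | succ d ihd =>
            intro hle
            have h1 : n + 1 + d < m := by omega
            have h2 : P (n + 1 + d) ≠ v := by
              intro hcon
              have := Nat.find_min hex (m := n + 1 + d) h1
              push_neg at this
              exact absurd hcon (this (by omega))
            rw [show n + 1 + (d+1) = (n + 1 + d) + 1 by omega, hNmono, if_neg h2, ihd (by omega)]
        have hm1 : n + 1 ≤ m := hlt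
        have := hconst (m - (n+1)) (by omega)
        rw [show n + 1 + (m - (n+1)) = m by omega] at this
        rw [this, hNmono, if_pos hn, hNn]
    -- cyclic structure: reach the arc e
    have hsrc0 : S.src ((C 0).1 v0) = v := (C 0).2 v0
    obtain ⟨k, hk⟩ := S.next_cyclic ((C 0).1 v0) e (by rw [hsrc0, he])
    -- periodicity of e under next
    obtain ⟨p, hp1, hpe⟩ : ∃ p, 1 ≤ p ∧ (S.next)^[p] e = e := by
      obtain ⟨i, j, hij, hEq⟩ := Finite.exists_ne_map_eq_of_infinite
        (fun n : ℕ => (S.next)^[n] e)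
      rcases Nat.lt_or_ge i j with hlt | hge
      · refine ⟨j - i, by omega, ?_⟩
        have hinj : Function.Injective ((S.next)^[i]) :=
          Function.Injective.iterate S.next_bijective.1 i
        apply hinj
        rw [← Function.iterate_add_apply, show i + (j - i) = j by omega]
        exact hEq.symm
      · have hlt : j < i := by omega
        refine ⟨i - j, by omega, ?_⟩
        have hinj : Function.Injective ((S.next)^[j]) :=
          Function.Injective.iterate S.next_bijective.1 j
        apply hinj
        rw [← Function.iterate_add_apply, show j + (i - j) = i by omega]
        exact hEq
    have hper : ∀ t, (S.next)^[p * t] e = e := by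
      intro t
      induction t with
      | zero => simp
      | succ t iht =>
        rw [show p * (t+1) = p * t + p by ring, Function.iterate_add_apply, hpe, iht]
    -- unboundedness of visits to head e
    have hub : ∀ M : ℕ, ∃ n, M < n ∧ P n = S.head e := by
      intro M
      set j := k + p * (M + 1) - 1 with hj
      obtain ⟨n, hn, hNn⟩ := visits j
      refine ⟨n + 1, ?_, ?_⟩
      · have : j ≤ n := hNn ▸ hNle n
        have : p * (M+1) ≥ M + 1 := Nat.le_mul_of_pos_left _ (by omega)
        omega
      · rw [hexit n hn, hNn]
        have hj1 : j + 1 = p * (M+1) + k := by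
          have : 0 < p * (M+1) := Nat.mul_pos (by omega) (by omega)
          omega
        rw [hj1, Function.iterate_add_apply, hk, hper]
    have : (P ⁻¹' {S.head e}).Infinite := by
      by_contra hfin
      rw [Set.not_infinite] at hfin
      obtain ⟨M, hM⟩ := hfin.bddAbove
      obtain ⟨n, hn1, hn2⟩ := hub M
      have hmem : n ∈ P ⁻¹' {S.head e} := by simp [hn2]
      exact absurd (hM hmem) (by omega)
    exact this
  -- now propagate along reachability to T
  obtain ⟨v, hvc⟩ := Finite.exists_infinite_fiber P
  have hv : (P ⁻¹' {v}).Infinite := Set.infinite_coe_iff.mp hvc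
  have hreach : ∀ w, Relation.ReflTransGen
      (fun a b => ∃ e : E, S.src e = a ∧ S.head e = b) v w → (P ⁻¹' {w}).Infinite := by
    intro w hw
    induction hw with
    | refl => exact hv
    | tail _ hedge ih =>
      obtain ⟨e, he1, he2⟩ := hedge
      exact he2 ▸ key _ ih e he1
  obtain ⟨t, ht⟩ := S.T_nonempty
  obtain ⟨n, hn⟩ := (hreach t (S.strongly_connected v t)).nonempty
  exact f1 n (by simpa using hn ▸ ht)

end RotorSystem


namespace RotorSystem

variable {V E : Type} [Fintype V] [DecidableEq V] [Fintype E] [DecidableEq E]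
variable (S : RotorSystem V E)

open Classical in
lemma route_eq (x : V) (ρ : S.RConf) :
    S.route x ρ = (S.step)^[Nat.find (S.term x ρ)] (x, ρ) := by
  rw [RotorSystem.route, dif_pos (S.term x ρ)]

open Classical in
lemma route_fst_mem (x : V) (ρ : S.RConf) : (S.route x ρ).1 ∈ S.T := by
  rw [S.route_eq]
  exact Nat.find_spec (S.term x ρ)

open Classical in
lemma route_of_mem (x : V) (ρ : S.RConf) (h : x ∈ S.T) : S.route x ρ = (x, ρ) := by
  rw [S.route_eq]
  have h0 : Nat.find (S.term x ρ) = 0 := by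
    rw [Nat.find_eq_zero]
    simpa using h
  rw [h0]
  rfl

open Classical in
lemma route_step (x : V) (ρ : S.RConf) (h : x ∉ S.T) :
    S.route x ρ = S.route (S.step (x, ρ)).1 (S.step (x, ρ)).2 := by
  have h1 := S.term x ρ
  have h2 := S.term (S.step (x, ρ)).1 (S.step (x, ρ)).2
  rw [S.route_eq, S.route_eq]
  have hshift : ∀ n : ℕ, (S.step)^[n+1] (x, ρ) = (S.step)^[n] (S.step (x, ρ)) :=
    fun n => Function.iterate_succ_apply S.step n (x, ρ)
  have hne : Nat.find h1 ≠ 0 := by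
    intro h0
    have := Nat.find_spec h1
    rw [h0] at this
    exact h (by simpa using this)
  have hle1 : Nat.find h1 ≤ Nat.find h2 + 1 := by
    apply Nat.find_le
    rw [hshift]
    exact Nat.find_spec h2
  have hle2 : Nat.find h2 ≤ Nat.find h1 - 1 := by
    apply Nat.find_le
    have := Nat.find_spec h1
    rw [show Nat.find h1 = (Nat.find h1 - 1) + 1 by omega, hshift] at this
    exact this
  have heq : Nat.find h1 = Nat.find h2 + 1 := by omega
  rw [heq, hshift]

/-- One multiparticle move at vertex `x`. -/
def mv (x : V) (s : Multiset V × S.RConf) : Multiset V × S.RConf :=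
  if x ∈ S.T then s
  else ((S.step (x, s.2)).1 ::ₘ s.1.erase x, (S.step (x, s.2)).2)

def finalState (s : Multiset V × S.RConf) (l : List V) : Multiset V × S.RConf :=
  l.foldl (fun s x => S.mv x s) s

def ValidRun : List V → Multiset V × S.RConf → Prop
  | [], _ => True
  | x :: l, s => (x ∉ S.T ∧ x ∈ s.1) ∧ ValidRun l (S.mv x s)

def AllDone (s : Multiset V × S.RConf) : Prop := ∀ x ∈ s.1, x ∈ S.T

lemma finalState_cons (s : Multiset V × S.RConf) (x : V) (l : List V) :
    S.finalState s (x :: l) = S.finalState (S.mv x s) l := rfl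

lemma finalState_append (s : Multiset V × S.RConf) (l₁ l₂ : List V) :
    S.finalState s (l₁ ++ l₂) = S.finalState (S.finalState s l₁) l₂ :=
  List.foldl_append

lemma validRun_append {s : Multiset V × S.RConf} {l₁ l₂ : List V}
    (h1 : S.ValidRun l₁ s) (h2 : S.ValidRun l₂ (S.finalState s l₁)) :
    S.ValidRun (l₁ ++ l₂) s := by
  induction l₁ generalizing s with
  | nil => exact h2
  | cons x l ih =>
    obtain ⟨hx, hv⟩ := h1
    exact ⟨hx, ih hv h2⟩

lemma mem_mv {x y : V} {s : Multiset V × S.RConf} (hxy : x ≠ y) (hx : x ∈ s.1) :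
    x ∈ (S.mv y s).1 := by
  rw [RotorSystem.mv]
  split
  · exact hx
  · exact Multiset.mem_cons_of_mem ((Multiset.mem_erase_of_ne hxy).mpr hx)

lemma count_erase' (a b : V) (s : Multiset V) :
    Multiset.count a (s.erase b) = Multiset.count a s - if a = b then 1 else 0 := by
  rcases eq_or_ne a b with rfl | h
  · simp [Multiset.count_erase_self]
  · simp [Multiset.count_erase_of_ne h, h]

lemma mv_comm {x y : V} {s : Multiset V × S.RConf} (hxy : x ≠ y)
    (hx : x ∉ S.T) (hy : y ∉ S.T) (hxm : x ∈ s.1) (hym : y ∈ s.1) :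
    S.mv x (S.mv y s) = S.mv y (S.mv x s) := by
  obtain ⟨m, ρ⟩ := s
  have hxy' : (⟨x, hx⟩ : S.V0) ≠ ⟨y, hy⟩ := fun hc => hxy (Subtype.ext_iff.mp hc)
  have hyx' : (⟨y, hy⟩ : S.V0) ≠ ⟨x, hx⟩ := fun hc => hxy (Subtype.ext_iff.mp hc).symm
  -- the rotor at x is untouched by the move at y, and vice versa
  have hry : ((S.step (y, ρ)).2).1 ⟨x, hx⟩ = ρ.1 ⟨x, hx⟩ := by
    rw [S.step_snd_apply y ρ hy, if_neg hxy']
  have hrx : ((S.step (x, ρ)).2).1 ⟨y, hy⟩ = ρ.1 ⟨y, hy⟩ := by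
    rw [S.step_snd_apply x ρ hx, if_neg hyx']
  have hfx : (S.step (x, (S.step (y, ρ)).2)).1 = (S.step (x, ρ)).1 := by
    rw [S.step_fst x _ hx, S.step_fst x ρ hx, hry]
  have hfy : (S.step (y, (S.step (x, ρ)).2)).1 = (S.step (y, ρ)).1 := by
    rw [S.step_fst y _ hy, S.step_fst y ρ hy, hrx]
  have hconf : (S.step (x, (S.step (y, ρ)).2)).2 = (S.step (y, (S.step (x, ρ)).2)).2 := by
    apply Subtype.ext
    funext w
    simp only [S.step_snd_apply x ((S.step (y, ρ)).2) hx,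
      S.step_snd_apply y ((S.step (x, ρ)).2) hy,
      S.step_snd_apply y ρ hy, S.step_snd_apply x ρ hx]
    rcases eq_or_ne w ⟨x, hx⟩ with rfl | hwx
    · simp [hxy', hyx']
    · rcases eq_or_ne w ⟨y, hy⟩ with rfl | hwy
      · simp [hxy', hyx']
      · simp [hwx, hwy]
  have hcx : 1 ≤ Multiset.count x m := Multiset.one_le_count_iff_mem.mpr hxm
  have hcy : 1 ≤ Multiset.count y m := Multiset.one_le_count_iff_mem.mpr hym
  have hmul : (S.step (x, ρ)).1 ::ₘ ((S.step (y, ρ)).1 ::ₘ m.erase y).erase x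
      = (S.step (y, ρ)).1 ::ₘ ((S.step (x, ρ)).1 ::ₘ m.erase x).erase y := by
    ext z
    simp only [Multiset.count_cons, count_erase']
    rcases eq_or_ne z x with rfl | hzx <;> rcases eq_or_ne z y with rfl | hzy <;>
      simp_all <;> omega
  simp only [RotorSystem.mv, if_neg hx, if_neg hy, Prod.mk.injEq]
  constructor
  · rw [hfx, hfy]
    exact hmul
  · exact hconf

lemma done_run {s : Multiset V × S.RConf} {l : List V} (hd : S.AllDone s)
    (hv : S.ValidRun l s) : S.finalState s l = s := by
  cases l with
  | nil => rfl
  | cons x l => exact absurd (hd x hv.1.2) hv.1.1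

lemma deflect (l : List V) : ∀ (s : Multiset V × S.RConf) (y : V),
    S.ValidRun l s → S.AllDone (S.finalState s l) → y ∉ S.T → y ∈ s.1 →
    ∃ l', S.ValidRun l' (S.mv y s) ∧
      S.finalState (S.mv y s) l' = S.finalState s l ∧ l'.length + 1 = l.length := by
  induction l with
  | nil =>
    intro s y _ hd hyT hym
    exact absurd (hd y hym) hyT
  | cons z γ ih =>
    intro s y hval hdone hyT hym
    obtain ⟨⟨hzT, hzm⟩, hvγ⟩ := hval
    by_cases hzy : z = y
    · subst hzy
      exact ⟨γ, hvγ, rfl, rfl⟩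
    · have hyz : y ≠ z := Ne.symm hzy
      have hy1 : y ∈ (S.mv z s).1 := S.mem_mv hyz hym
      obtain ⟨γ', hv', hf', hl'⟩ := ih (S.mv z s) y hvγ hdone hyT hy1
      have hz1 : z ∈ (S.mv y s).1 := S.mem_mv hzy hzm
      have hcomm : S.mv z (S.mv y s) = S.mv y (S.mv z s) :=
        S.mv_comm hzy hzT hyT hzm hym
      refine ⟨z :: γ', ⟨⟨hzT, hz1⟩, ?_⟩, ?_, by simpa using hl'⟩
      · rw [hcomm]; exact hv'
      · rw [S.finalState_cons, hcomm, hf']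
        rfl

lemma unique (n : ℕ) : ∀ (l₁ l₂ : List V) (s : Multiset V × S.RConf),
    l₁.length ≤ n → S.ValidRun l₁ s → S.AllDone (S.finalState s l₁) →
    S.ValidRun l₂ s → S.AllDone (S.finalState s l₂) →
    S.finalState s l₁ = S.finalState s l₂ := by
  induction n with
  | zero =>
    intro l₁ l₂ s hlen hv1 hd1 hv2 hd2
    have : l₁ = [] := List.eq_nil_of_length_eq_zero (by omega)
    subst this
    exact (S.done_run hd1 hv2).symm
  | succ n ih =>
    intro l₁ l₂ s hlen hv1 hd1 hv2 hd2
    cases l₁ with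
    | nil => exact (S.done_run hd1 hv2).symm
    | cons x α =>
      cases l₂ with
      | nil => exact S.done_run hd2 hv1
      | cons y β =>
        obtain ⟨⟨hxT, hxm⟩, hvα⟩ := hv1
        obtain ⟨⟨hyT, hym⟩, hvβ⟩ := hv2
        by_cases hxy : x = y
        · subst hxy
          have hαn : α.length ≤ n := by simp at hlen; omega
          exact ih α β (S.mv x s) hαn hvα hd1 hvβ hd2
        · have hy1 : y ∈ (S.mv x s).1 := S.mem_mv (Ne.symm hxy) hym
          have hx1 : x ∈ (S.mv y s).1 := S.mem_mv hxy hxm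
          obtain ⟨δ, hvδ, hfδ, hlδ⟩ := S.deflect α (S.mv x s) y hvα hd1 hyT hy1
          obtain ⟨ε, hvε, hfε, hlε⟩ := S.deflect β (S.mv y s) x hvβ hd2 hxT hx1
          have hcomm : S.mv x (S.mv y s) = S.mv y (S.mv x s) :=
            S.mv_comm hxy hxT hyT hxm hym
          rw [hcomm] at hvε hfε
          have hδε : S.finalState (S.mv y (S.mv x s)) δ
              = S.finalState (S.mv y (S.mv x s)) ε := by
            apply ih δ ε (S.mv y (S.mv x s)) (by simp at hlen; omega) hvδ _ hvε _
            · rw [hfδ]; exact hd1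
            · rw [hfε]; exact hd2
          calc S.finalState s (x :: α) = S.finalState (S.mv x s) α := rfl
            _ = S.finalState (S.mv y (S.mv x s)) δ := hfδ.symm
            _ = S.finalState (S.mv y (S.mv x s)) ε := hδε
            _ = S.finalState (S.mv y s) β := hfε
            _ = S.finalState s (y :: β) := rfl

lemma runOfRoute (n : ℕ) : ∀ (x : V) (ρ : S.RConf) (c : Multiset V),
    ((S.step)^[n] (x, ρ)).1 ∈ S.T →
    ∃ l, S.ValidRun l (x ::ₘ c, ρ) ∧
      S.finalState (x ::ₘ c, ρ) l = ((S.route x ρ).1 ::ₘ c, (S.route x ρ).2) := by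
  induction n with
  | zero =>
    intro x ρ c hx
    refine ⟨[], trivial, ?_⟩
    rw [S.route_of_mem x ρ (by simpa using hx)]
    rfl
  | succ n ih =>
    intro x ρ c hx
    by_cases hxT : x ∈ S.T
    · refine ⟨[], trivial, ?_⟩
      rw [S.route_of_mem x ρ hxT]
      rfl
    · have hn : ((S.step)^[n] ((S.step (x, ρ)).1, (S.step (x, ρ)).2)).1 ∈ S.T := by
        rw [show ((S.step (x, ρ)).1, (S.step (x, ρ)).2) = S.step (x, ρ) from rfl,
          ← Function.iterate_succ_apply]
        exact hx
      obtain ⟨l₁, hv₁, hf₁⟩ := ih (S.step (x, ρ)).1 (S.step (x, ρ)).2 c hn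
      have hmv : S.mv x (x ::ₘ c, ρ) = ((S.step (x, ρ)).1 ::ₘ c, (S.step (x, ρ)).2) := by
        rw [RotorSystem.mv, if_neg hxT]
        simp [Multiset.erase_cons_head]
      refine ⟨x :: l₁, ⟨⟨hxT, Multiset.mem_cons_self x c⟩, ?_⟩, ?_⟩
      · rw [hmv]; exact hv₁
      · rw [S.finalState_cons, hmv, hf₁, S.route_step x ρ hxT]

lemma route_comm (a b : V) (ρ : S.RConf) :
    (S.route b (S.route a ρ).2).2 = (S.route a (S.route b ρ).2).2 := by
  -- run 1: route a, then b
  obtain ⟨n₁, hn₁⟩ := S.term a ρ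
  obtain ⟨l₁, hv₁, hf₁⟩ := S.runOfRoute n₁ a ρ (b ::ₘ 0) hn₁
  obtain ⟨n₂, hn₂⟩ := S.term b (S.route a ρ).2
  obtain ⟨l₂, hv₂, hf₂⟩ := S.runOfRoute n₂ b (S.route a ρ).2 ((S.route a ρ).1 ::ₘ 0) hn₂
  have hswap₁ : ((S.route a ρ).1 ::ₘ b ::ₘ 0, (S.route a ρ).2)
      = (b ::ₘ (S.route a ρ).1 ::ₘ 0, (S.route a ρ).2) := by
    rw [Multiset.cons_swap]
  have hrun₁ : S.ValidRun (l₁ ++ l₂) (a ::ₘ b ::ₘ 0, ρ) := by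
    apply S.validRun_append hv₁
    rw [hf₁, hswap₁]
    exact hv₂
  have hfin₁ : S.finalState (a ::ₘ b ::ₘ 0, ρ) (l₁ ++ l₂)
      = ((S.route b (S.route a ρ).2).1 ::ₘ (S.route a ρ).1 ::ₘ 0,
          (S.route b (S.route a ρ).2).2) := by
    rw [S.finalState_append, hf₁, hswap₁, hf₂]
  -- run 2: route b, then a
  obtain ⟨m₁, hm₁⟩ := S.term b ρ
  obtain ⟨k₁, hw₁, hg₁⟩ := S.runOfRoute m₁ b ρ (a ::ₘ 0) hm₁
  obtain ⟨m₂, hm₂⟩ := S.term a (S.route b ρ).2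
  obtain ⟨k₂, hw₂, hg₂⟩ := S.runOfRoute m₂ a (S.route b ρ).2 ((S.route b ρ).1 ::ₘ 0) hm₂
  have hswap₂ : ((S.route b ρ).1 ::ₘ a ::ₘ 0, (S.route b ρ).2)
      = (a ::ₘ (S.route b ρ).1 ::ₘ 0, (S.route b ρ).2) := by
    rw [Multiset.cons_swap]
  have hstart : (b ::ₘ a ::ₘ 0, ρ) = ((a ::ₘ b ::ₘ 0 : Multiset V), ρ) := by
    rw [Multiset.cons_swap]
  have hrun₂ : S.ValidRun (k₁ ++ k₂) (a ::ₘ b ::ₘ 0, ρ) := by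
    rw [← hstart]
    apply S.validRun_append hw₁
    rw [hg₁, hswap₂]
    exact hw₂
  have hfin₂ : S.finalState (a ::ₘ b ::ₘ 0, ρ) (k₁ ++ k₂)
      = ((S.route a (S.route b ρ).2).1 ::ₘ (S.route b ρ).1 ::ₘ 0,
          (S.route a (S.route b ρ).2).2) := by
    rw [← hstart, S.finalState_append, hg₁, hswap₂, hg₂]
  have hd₁ : S.AllDone (S.finalState (a ::ₘ b ::ₘ 0, ρ) (l₁ ++ l₂)) := by
    rw [hfin₁]
    intro z hz
    simp only [Multiset.mem_cons, Multiset.notMem_zero, or_false] at hz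
    rcases hz with rfl | rfl
    · exact S.route_fst_mem _ _
    · exact S.route_fst_mem _ _
  have hd₂ : S.AllDone (S.finalState (a ::ₘ b ::ₘ 0, ρ) (k₁ ++ k₂)) := by
    rw [hfin₂]
    intro z hz
    simp only [Multiset.mem_cons, Multiset.notMem_zero, or_false] at hz
    rcases hz with rfl | rfl
    · exact S.route_fst_mem _ _
    · exact S.route_fst_mem _ _
  have := S.unique (l₁ ++ l₂).length (l₁ ++ l₂) (k₁ ++ k₂) (a ::ₘ b ::ₘ 0, ρ)
    le_rfl hrun₁ hd₁ hrun₂ hd₂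
  rw [hfin₁, hfin₂] at this
  exact (Prod.ext_iff.mp this).2

lemma addAt_comm (v w : S.V0) (ρ : S.RConf) :
    S.addAt v (S.addAt w ρ) = S.addAt w (S.addAt v ρ) := by
  simp only [RotorSystem.addAt]
  exact S.route_comm w.1 v.1 ρ

lemma addAt_commute (v w : S.V0) :
    Function.Commute (S.addAt v) (S.addAt w) :=
  fun ρ => S.addAt_comm v w ρ

lemma foldr_comm_iter (σ : S.PConf) (l : List S.V0) (v : S.V0) (a : ℕ) (ρ : S.RConf) :
    (S.addAt v)^[a] (l.foldr (fun u r => (S.addAt u)^[σ u] r) ρ)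
      = l.foldr (fun u r => (S.addAt u)^[σ u] r) ((S.addAt v)^[a] ρ) := by
  induction l generalizing ρ with
  | nil => rfl
  | cons u l ih =>
    simp only [List.foldr_cons]
    rw [(S.addAt_commute v u).iterate_iterate a (σ u) _, ih]

lemma foldr_foldr_comm (σ τ : S.PConf) (l₁ l₂ : List S.V0) (ρ : S.RConf) :
    l₁.foldr (fun u r => (S.addAt u)^[σ u] r) (l₂.foldr (fun u r => (S.addAt u)^[τ u] r) ρ)
      = l₂.foldr (fun u r => (S.addAt u)^[τ u] r)
          (l₁.foldr (fun u r => (S.addAt u)^[σ u] r) ρ) := by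
  induction l₁ generalizing ρ with
  | nil => rfl
  | cons v l ih =>
    simp only [List.foldr_cons]
    rw [ih, S.foldr_comm_iter τ l₂ v (σ v)]

lemma act_comm (σ τ : S.PConf) (ρ : S.RConf) :
    S.act σ (S.act τ ρ) = S.act τ (S.act σ ρ) := by
  simp only [RotorSystem.act]
  exact S.foldr_foldr_comm σ τ _ _ ρ

end RotorSystem


/-- **Lemma (equivalence is respected by the particle action).**
If `ρ ≡ ρ'`, then `τρ ≡ τρ'` for every particle configuration `τ`. -/
theorem requiv_act {V E : Type} [Fintype V] [DecidableEq V] [Fintype E]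
    [DecidableEq E] (S : RotorSystem V E)
    (ρ ρ' : S.RConf) (h : S.REquiv ρ ρ') (τ : S.PConf) :
    S.REquiv (S.act τ ρ) (S.act τ ρ') := by
  obtain ⟨σ, hσ⟩ := h
  refine ⟨σ, ?_⟩
  calc S.act σ (S.act τ ρ) = S.act τ (S.act σ ρ) := S.act_comm σ τ ρ
    _ = S.act τ (S.act σ ρ') := by rw [hσ]
    _ = S.act σ (S.act τ ρ') := (S.act_comm σ τ ρ').symm
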